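/- arXiv:math/0401017 — 2 statements merged into one kernel-verified Lean document; each statement's English description precedes it below -/
import Mathlib

section
/- Let Λ be a k-graph with fundamental groupoid (𝒢(Λ), i) and let p : Ω → Λ be a connected covering. Then for every vertex x of Λ, the family {p_*π(Ω,v) : v a vertex of Ω with p(v) = x} is a conjugacy class of subgroups of the fundamental group π(Λ,x); that is, any two subgroups in this family are conjugate in π(Λ,x), and every subgroup of π(Λ,x) conjugate to a member of the family is itself a member of the family. -/
/-!
Arrows-only formalization of `k`-graphs (higher-rank graphs), their coverings,
fundamental groupoids, and groupoid actions, following Pask–Quigg–Raeburn,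
"Coverings of k-graphs".

A small category is encoded by its set of arrows `A` together with
source/range maps `src rng : A → A` (whose common image is the set of
identities = vertices) and a (guarded) total composition `comp : A → A → A`,
where `comp f g` is the composite "f after g", meaningful when `src f = rng g`.
A `k`-graph additionally has a degree map `deg : A → (Fin k → ℕ)` which is
functorial and satisfies the unique factorization property.
-/

namespace KGraphCovering

/-- A `k`-graph in arrows-only form. -/
structure KGraphStruct (k : ℕ) (A : Type) : Type where
  src : A → A
  rng : A → A
  comp : A → A → A
  deg : A → (Fin k → ℕ)
  src_src : ∀ f, src (src f) = src f
  rng_src : ∀ f, rng (src f) = src f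
  src_rng : ∀ f, src (rng f) = rng f
  rng_rng : ∀ f, rng (rng f) = rng f
  comp_src_id : ∀ f, comp f (src f) = f
  rng_comp_id : ∀ f, comp (rng f) f = f
  src_comp : ∀ f g, src f = rng g → src (comp f g) = src g
  rng_comp : ∀ f g, src f = rng g → rng (comp f g) = rng f
  assoc : ∀ f g h, src f = rng g → src g = rng h →
    comp (comp f g) h = comp f (comp g h)
  deg_comp : ∀ f g, src f = rng g → deg (comp f g) = deg f + deg g
  deg_src : ∀ f, deg (src f) = 0
  factor : ∀ f m n, deg f = m + n →
    ∃! q : A × A, src q.1 = rng q.2 ∧ deg q.1 = m ∧ deg q.2 = n ∧ comp q.1 q.2 = f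

namespace KGraphStruct

variable {k : ℕ} {A : Type}

/-- The vertices (objects) are the identity arrows. -/
def IsVertex (S : KGraphStruct k A) (v : A) : Prop := S.src v = v

/-- A `k`-graph is connected if the equivalence relation generated by
"there is a morphism from `v` to `u`" relates all pairs of vertices. -/
def Connected (S : KGraphStruct k A) : Prop :=
  ∀ u v, S.IsVertex u → S.IsVertex v →
    Relation.EqvGen (fun a b => ∃ f, S.rng f = a ∧ S.src f = b) u v

end KGraphStruct

/-- A groupoid in arrows-only form. -/
structure GroupoidStruct (B : Type) : Type where
  src : B → B
  rng : B → B
  comp : B → B → B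
  inv : B → B
  src_src : ∀ f, src (src f) = src f
  rng_src : ∀ f, rng (src f) = src f
  src_rng : ∀ f, src (rng f) = rng f
  rng_rng : ∀ f, rng (rng f) = rng f
  comp_src_id : ∀ f, comp f (src f) = f
  rng_comp_id : ∀ f, comp (rng f) f = f
  src_comp : ∀ f g, src f = rng g → src (comp f g) = src g
  rng_comp : ∀ f g, src f = rng g → rng (comp f g) = rng f
  assoc : ∀ f g h, src f = rng g → src g = rng h →
    comp (comp f g) h = comp f (comp g h)
  src_inv : ∀ f, src (inv f) = rng f
  rng_inv : ∀ f, rng (inv f) = src f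
  inv_comp_self : ∀ f, comp (inv f) f = src f
  comp_inv_self : ∀ f, comp f (inv f) = rng f

namespace GroupoidStruct

variable {B : Type}

/-- The vertices (objects) of a groupoid are the identity arrows. -/
def IsVertex (G : GroupoidStruct B) (v : B) : Prop := G.src v = v

/-- A subgroup of the isotropy group `x𝒢x`, as a set of arrows. -/
def IsSubgroupAt (G : GroupoidStruct B) (x : B) (H : Set B) : Prop :=
  (∀ a ∈ H, G.src a = x ∧ G.rng a = x) ∧ x ∈ H ∧
  (∀ a ∈ H, ∀ b ∈ H, G.comp a b ∈ H) ∧ (∀ a ∈ H, G.inv a ∈ H)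

/-- `K` is a conjugate of `H` in the isotropy group at `x`. -/
def ConjAt (G : GroupoidStruct B) (x : B) (H K : Set B) : Prop :=
  ∃ g, G.src g = x ∧ G.rng g = x ∧
    K = (fun a => G.comp (G.comp g a) (G.inv g)) '' H

/-- `H` is a normal subset of the isotropy group at `x`. -/
def IsNormalAt (G : GroupoidStruct B) (x : B) (H : Set B) : Prop :=
  ∀ g, G.src g = x → G.rng g = x → ∀ a ∈ H, G.comp (G.comp g a) (G.inv g) ∈ H

/-- The normalizer of `H` in the isotropy group at `x`. -/
def normalizerAt (G : GroupoidStruct B) (x : B) (H : Set B) : Set B :=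
  {g | G.src g = x ∧ G.rng g = x ∧
    (fun a => G.comp (G.comp g a) (G.inv g)) '' H = H}

end GroupoidStruct

/-- `f` is a morphism of `k`-graphs (a degree-preserving functor). -/
def IsKGraphHomFun {k : ℕ} {A A' : Type} (S : KGraphStruct k A)
    (T : KGraphStruct k A') (f : A → A') : Prop :=
  (∀ a, f (S.src a) = T.src (f a)) ∧
  (∀ a, f (S.rng a) = T.rng (f a)) ∧
  (∀ a b, S.src a = S.rng b → f (S.comp a b) = T.comp (f a) (f b)) ∧
  (∀ a, T.deg (f a) = S.deg a)

/-- `f` is a functor from a `k`-graph to a groupoid. -/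
def IsFunctorToGpdFun {k : ℕ} {A B : Type} (S : KGraphStruct k A)
    (G : GroupoidStruct B) (f : A → B) : Prop :=
  (∀ a, f (S.src a) = G.src (f a)) ∧
  (∀ a, f (S.rng a) = G.rng (f a)) ∧
  (∀ a b, S.src a = S.rng b → f (S.comp a b) = G.comp (f a) (f b))

/-- `f` is a morphism of groupoids (a functor). -/
def IsGpdHomFun {B C : Type} (G : GroupoidStruct B) (H : GroupoidStruct C)
    (f : B → C) : Prop :=
  (∀ a, f (G.src a) = H.src (f a)) ∧
  (∀ a, f (G.rng a) = H.rng (f a)) ∧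
  (∀ a b, G.src a = G.rng b → f (G.comp a b) = H.comp (f a) (f b))

/-- `p : Ω → Λ` is a covering of `k`-graphs: a surjective `k`-graph morphism
which maps `Ωv` bijectively onto `Λp(v)` and `vΩ` bijectively onto `p(v)Λ`
for every vertex `v` of `Ω`. -/
structure IsCovering {k : ℕ} {A A' : Type} (S : KGraphStruct k A')
    (T : KGraphStruct k A) (p : A' → A) : Prop where
  hom : IsKGraphHomFun S T p
  surj : Function.Surjective p
  src_inj : ∀ a b, S.src a = S.src b → p a = p b → a = b
  src_lift : ∀ v, S.IsVertex v → ∀ g, T.src g = p v → ∃ a, S.src a = v ∧ p a = g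
  rng_inj : ∀ a b, S.rng a = S.rng b → p a = p b → a = b
  rng_lift : ∀ v, S.IsVertex v → ∀ g, T.rng g = p v → ∃ a, S.rng a = v ∧ p a = g

/-- A fundamental groupoid of a `k`-graph `S`: a groupoid `G` whose object
set is identified with the vertex set of `S` via the canonical functor `i`
(which is bijective on objects), with the universal property that every
functor from `S` to a groupoid factors uniquely through `i`. -/
structure FundamentalGroupoid {k : ℕ} {A : Type} (S : KGraphStruct k A) :
    Type 1 where
  B : Type
  G : GroupoidStruct B
  i : A → B
  i_hom : IsFunctorToGpdFun S G i
  obj_bij : ∀ w, G.IsVertex w → ∃! v, S.IsVertex v ∧ i v = w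
  univ : ∀ {C : Type} (H : GroupoidStruct C) (F : A → C),
    IsFunctorToGpdFun S H F →
    ∃! F' : B → C, IsGpdHomFun G H F' ∧ ∀ a, F' (i a) = F a

/-- The fundamental group `π(Λ,x)` at a vertex `x`, as the isotropy of the
fundamental groupoid at `i x`. -/
def FundamentalGroupoid.pi1 {k : ℕ} {A : Type} {S : KGraphStruct k A}
    (F : FundamentalGroupoid S) (x : A) : Set F.B :=
  {a | F.G.src a = F.i x ∧ F.G.rng a = F.i x}

/-- An automorphism of the covering `p : Ω → Λ`. -/
def IsCoveringAut {k : ℕ} {A A' : Type} (Ω : KGraphStruct k A')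
    (Λ : KGraphStruct k A) (p : A' → A) (φ : A' → A') : Prop :=
  Function.Bijective φ ∧ IsKGraphHomFun Ω Ω φ ∧ ∀ a, p (φ a) = p a

/-- The action of the fundamental groupoid `F = 𝒢(Λ)` on the vertex set of a
covering `p : Ω → Λ`, determined by `i(p(λ)) ⬝ s(λ) = r(λ)`.  The fiber of a
vertex `w` of `Ω` is over the object `F.i (p w)`. -/
structure CorrespondingAction {k : ℕ} {A A' : Type} (Ω : KGraphStruct k A')
    (Λ : KGraphStruct k A) (F : FundamentalGroupoid Λ) (p : A' → A)
    (act : F.B → A' → A') : Prop where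
  act_vertex : ∀ a w, Ω.IsVertex w → F.G.src a = F.i (p w) →
    Ω.IsVertex (act a w) ∧ F.i (p (act a w)) = F.G.rng a
  act_id : ∀ w, Ω.IsVertex w → act (F.i (p w)) w = w
  act_comp : ∀ a b w, Ω.IsVertex w → F.G.src b = F.i (p w) →
    F.G.src a = F.G.rng b → act (F.G.comp a b) w = act a (act b w)
  act_cov : ∀ lam, act (F.i (p lam)) (Ω.src lam) = Ω.rng lam

/-- An action of a groupoid `G` on a set `V`, presented by an anchor map
`fib : V → B` (landing in vertices) and a guarded action map. -/
structure GpdActionStruct {B : Type} (G : GroupoidStruct B) (V : Type) :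
    Type where
  fib : V → B
  act : B → V → V
  fib_vertex : ∀ v, G.src (fib v) = fib v
  act_fib : ∀ a v, G.src a = fib v → fib (act a v) = G.rng a
  act_id : ∀ v, act (fib v) v = v
  act_comp : ∀ a b v, G.src b = fib v → G.src a = G.rng b →
    act (G.comp a b) v = act a (act b v)

namespace GpdActionStruct

variable {B V W : Type} {G : GroupoidStruct B}

/-- Transitivity of a groupoid action. -/
def Transitive (ρ : GpdActionStruct G V) : Prop :=
  ∀ u v : V, ∃ a, G.src a = ρ.fib v ∧ ρ.act a v = u

/-- The stability group of the action at `v`. -/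
def stab (ρ : GpdActionStruct G V) (v : V) : Set B :=
  {a | G.src a = ρ.fib v ∧ G.rng a = ρ.fib v ∧ ρ.act a v = v}

/-- Freeness of a groupoid action: all stability groups are trivial. -/
def Free (ρ : GpdActionStruct G V) : Prop :=
  ∀ (v : V) (a : B), a ∈ ρ.stab v → a = ρ.fib v

end GpdActionStruct

/-- A morphism of actions of the groupoid `G`: a fiber-preserving
equivariant map. -/
def IsActionHom {B V W : Type} {G : GroupoidStruct B}
    (ρ : GpdActionStruct G V) (σ : GpdActionStruct G W) (φ : V → W) : Prop :=
  (∀ v, σ.fib (φ v) = ρ.fib v) ∧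
  ∀ a v, G.src a = ρ.fib v → φ (ρ.act a v) = σ.act a (φ v)

/-- An automorphism of an action of the groupoid `G`. -/
def IsActionAut {B V : Type} {G : GroupoidStruct B}
    (ρ : GpdActionStruct G V) (φ : V → V) : Prop :=
  Function.Bijective φ ∧ IsActionHom ρ ρ φ

/-- A universal covering: a connected covering admitting a morphism of
coverings to every connected covering of the base. -/
def IsUniversalCovering {k : ℕ} {A A' : Type} (Ω : KGraphStruct k A')
    (Λ : KGraphStruct k A) (p : A' → A) : Prop :=
  IsCovering Ω Λ p ∧ Ω.Connected ∧
  ∀ (A'' : Type) (Sg : KGraphStruct k A'') (q : A'' → A),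
    IsCovering Sg Λ q → Sg.Connected →
    ∃ φ : A' → A'', IsKGraphHomFun Ω Sg φ ∧ ∀ a, q (φ a) = p a

end KGraphCovering

namespace KGraphCovering

/-! ### Auxiliary groupoid lemmas -/

section GroupoidLemmas

variable {B C : Type}

theorem GroupoidStruct.eq_inv_of (G : GroupoidStruct B) {x y : B}
    (h1 : G.src y = G.rng x) (h3 : G.comp y x = G.src x) : y = G.inv x := by
  calc y = G.comp y (G.src y) := (G.comp_src_id y).symm
    _ = G.comp y (G.comp x (G.inv x)) := by rw [h1, G.comp_inv_self]
    _ = G.comp (G.comp y x) (G.inv x) := (G.assoc y x (G.inv x) h1 (G.rng_inv x).symm).symm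
    _ = G.comp (G.rng (G.inv x)) (G.inv x) := by rw [h3, G.rng_inv]
    _ = G.inv x := G.rng_comp_id _

theorem GroupoidStruct.inv_inv (G : GroupoidStruct B) (c : B) :
    G.inv (G.inv c) = c :=
  (G.eq_inv_of (by rw [G.rng_inv]) (by rw [G.comp_inv_self, G.src_inv])).symm

theorem hom_inv {G : GroupoidStruct B} {H : GroupoidStruct C} {f : B → C}
    (hf : IsGpdHomFun G H f) (a : B) : f (G.inv a) = H.inv (f a) := by
  refine H.eq_inv_of ?_ ?_
  · rw [← hf.1, G.src_inv, hf.2.1]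
  · rw [← hf.2.2 _ _ (by rw [G.src_inv]), G.inv_comp_self, hf.1]

/-- Conjugation in a groupoid. -/
def GroupoidStruct.conj (G : GroupoidStruct B) (c a : B) : B :=
  G.comp (G.comp c a) (G.inv c)

theorem GroupoidStruct.conj_src (G : GroupoidStruct B) {c a : B}
    (h1 : G.src c = G.rng a) (h2 : G.src a = G.rng a) :
    G.src (G.conj c a) = G.rng c := by
  have hg : G.src (G.comp c a) = G.rng (G.inv c) := by
    rw [G.src_comp c a h1, G.rng_inv, h2, h1]
  rw [GroupoidStruct.conj, G.src_comp _ _ hg, G.src_inv]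

theorem GroupoidStruct.conj_rng (G : GroupoidStruct B) {c a : B}
    (h1 : G.src c = G.rng a) (h2 : G.src a = G.rng a) :
    G.rng (G.conj c a) = G.rng c := by
  have hg : G.src (G.comp c a) = G.rng (G.inv c) := by
    rw [G.src_comp c a h1, G.rng_inv, h2, h1]
  rw [GroupoidStruct.conj, G.rng_comp _ _ hg, G.rng_comp c a h1]

theorem GroupoidStruct.conj_conj (G : GroupoidStruct B) {c a : B}
    (h1 : G.src c = G.rng a) (h2 : G.src a = G.rng a) :
    G.conj (G.inv c) (G.conj c a) = a := by
  have step1 : G.comp (G.inv c) (G.comp (G.comp c a) (G.inv c))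
      = G.comp (G.comp (G.inv c) (G.comp c a)) (G.inv c) := by
    refine (G.assoc _ _ _ ?_ ?_).symm
    · rw [G.src_inv, G.rng_comp c a h1]
    · rw [G.src_comp c a h1, G.rng_inv, h2, h1]
  have step2 : G.comp (G.inv c) (G.comp c a) = a := by
    rw [← G.assoc _ _ _ (by rw [G.src_inv]) h1, G.inv_comp_self, h1, G.rng_comp_id]
  have step3 : G.comp (G.comp a (G.inv c)) c = a := by
    rw [G.assoc a (G.inv c) c (by rw [G.rng_inv, h2, h1]) (by rw [G.src_inv]),
      G.inv_comp_self]
    have : G.src c = G.src a := h1.trans h2.symm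
    rw [this, G.comp_src_id]
  show G.comp (G.comp (G.inv c) (G.conj c a)) (G.inv (G.inv c)) = a
  rw [G.inv_inv, GroupoidStruct.conj, step1, step2, step3]

theorem hom_conj {G : GroupoidStruct B} {H : GroupoidStruct C} {f : B → C}
    (hf : IsGpdHomFun G H f) {c a : B}
    (h1 : G.src c = G.rng a) (h2 : G.src a = G.rng a) :
    f (G.conj c a) = H.conj (f c) (f a) := by
  have hg : G.src (G.comp c a) = G.rng (G.inv c) := by
    rw [G.src_comp c a h1, G.rng_inv, h2, h1]
  rw [GroupoidStruct.conj, hf.2.2 _ _ hg, hf.2.2 _ _ h1, hom_inv hf,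
    GroupoidStruct.conj]

/-- Conjugation transports isotropy sets along an arrow, through a groupoid
homomorphism. -/
theorem image_isotropy_conj {G : GroupoidStruct B} {H : GroupoidStruct C}
    {f : B → C} (hf : IsGpdHomFun G H f) {c e₁ e₂ : B}
    (hc1 : G.src c = e₁) (hc2 : G.rng c = e₂) :
    f '' {a | G.src a = e₂ ∧ G.rng a = e₂}
      = (fun a => H.comp (H.comp (f c) a) (H.inv (f c)))
          '' (f '' {a | G.src a = e₁ ∧ G.rng a = e₁}) := by
  ext y
  constructor
  · rintro ⟨b, ⟨hb1, hb2⟩, rfl⟩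
    have h1' : G.src (G.inv c) = G.rng b := by rw [G.src_inv, hc2, hb2]
    have h2' : G.src b = G.rng b := hb1.trans hb2.symm
    refine ⟨f (G.conj (G.inv c) b), ⟨G.conj (G.inv c) b, ⟨?_, ?_⟩, rfl⟩, ?_⟩
    · rw [G.conj_src h1' h2', G.rng_inv, hc1]
    · rw [G.conj_rng h1' h2', G.rng_inv, hc1]
    · have h1'' : G.src c = G.rng (G.conj (G.inv c) b) := by
        rw [G.conj_rng h1' h2', G.rng_inv, hc1]
      have h2'' : G.src (G.conj (G.inv c) b) = G.rng (G.conj (G.inv c) b) := by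
        rw [G.conj_src h1' h2', G.conj_rng h1' h2']
      have : f (G.conj c (G.conj (G.inv c) b)) = f b := by
        congr 1
        have := G.conj_conj h1' h2'
        rwa [G.inv_inv] at this
      rw [← this, hom_conj hf h1'' h2'']
      rfl
  · rintro ⟨y', ⟨a, ⟨ha1, ha2⟩, rfl⟩, rfl⟩
    have h1 : G.src c = G.rng a := by rw [hc1, ha2]
    have h2 : G.src a = G.rng a := ha1.trans ha2.symm
    refine ⟨G.conj c a, ⟨?_, ?_⟩, ?_⟩
    · rw [G.conj_src h1 h2, hc2]
    · rw [G.conj_rng h1 h2, hc2]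
    · rw [hom_conj hf h1 h2]
      rfl

end GroupoidLemmas

/-! ### Generation of the fundamental groupoid by the image of `i` -/

section Generation

variable {k : ℕ} {A : Type} {S : KGraphStruct k A}

/-- The subgroupoid of the fundamental groupoid generated by the image of `i`. -/
inductive Gen (F : FundamentalGroupoid S) : F.B → Prop
  | incl (a : A) : Gen F (F.i a)
  | ginv {b : F.B} : Gen F b → Gen F (F.G.inv b)
  | gcomp {a b : F.B} : Gen F a → Gen F b → F.G.src a = F.G.rng b →
      Gen F (F.G.comp a b)

theorem Gen.gsrc {F : FundamentalGroupoid S} {b : F.B} (h : Gen F b) :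
    Gen F (F.G.src b) := by
  rw [← F.G.inv_comp_self b]
  exact .gcomp h.ginv h (F.G.src_inv b)

theorem Gen.grng {F : FundamentalGroupoid S} {b : F.B} (h : Gen F b) :
    Gen F (F.G.rng b) := by
  rw [← F.G.comp_inv_self b]
  exact .gcomp h h.ginv (F.G.rng_inv b).symm

-- The generated subgroupoid as a groupoid structure.
open Classical in
noncomputable def genGpd (F : FundamentalGroupoid S) : GroupoidStruct {b : F.B // Gen F b} where
  src x := ⟨F.G.src x.1, x.2.gsrc⟩
  rng x := ⟨F.G.rng x.1, x.2.grng⟩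
  inv x := ⟨F.G.inv x.1, x.2.ginv⟩
  comp x y := if h : F.G.src x.1 = F.G.rng y.1 then
    ⟨F.G.comp x.1 y.1, .gcomp x.2 y.2 h⟩ else x
  src_src x := Subtype.ext (F.G.src_src x.1)
  rng_src x := Subtype.ext (F.G.rng_src x.1)
  src_rng x := Subtype.ext (F.G.src_rng x.1)
  rng_rng x := Subtype.ext (F.G.rng_rng x.1)
  comp_src_id x := by
    dsimp only
    rw [dif_pos (by rw [F.G.rng_src])]
    exact Subtype.ext (F.G.comp_src_id x.1)
  rng_comp_id x := by
    dsimp only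
    rw [dif_pos (F.G.src_rng x.1)]
    exact Subtype.ext (F.G.rng_comp_id x.1)
  src_comp x y h := by
    have h' : F.G.src x.1 = F.G.rng y.1 := congrArg Subtype.val h
    rw [dif_pos h']
    exact Subtype.ext (F.G.src_comp x.1 y.1 h')
  rng_comp x y h := by
    have h' : F.G.src x.1 = F.G.rng y.1 := congrArg Subtype.val h
    rw [dif_pos h']
    exact Subtype.ext (F.G.rng_comp x.1 y.1 h')
  assoc x y z h1 h2 := by
    have h1' : F.G.src x.1 = F.G.rng y.1 := congrArg Subtype.val h1
    have h2' : F.G.src y.1 = F.G.rng z.1 := congrArg Subtype.val h2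
    rw [dif_pos h1', dif_pos h2']
    rw [dif_pos (show F.G.src (F.G.comp x.1 y.1) = F.G.rng z.1 by
      rw [F.G.src_comp x.1 y.1 h1', h2'])]
    rw [dif_pos (show F.G.src x.1 = F.G.rng (F.G.comp y.1 z.1) by
      rw [F.G.rng_comp y.1 z.1 h2', h1'])]
    exact Subtype.ext (F.G.assoc x.1 y.1 z.1 h1' h2')
  src_inv x := Subtype.ext (F.G.src_inv x.1)
  rng_inv x := Subtype.ext (F.G.rng_inv x.1)
  inv_comp_self x := by
    dsimp only
    rw [dif_pos (F.G.src_inv x.1)]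
    exact Subtype.ext (F.G.inv_comp_self x.1)
  comp_inv_self x := by
    dsimp only
    rw [dif_pos (F.G.rng_inv x.1).symm]
    exact Subtype.ext (F.G.comp_inv_self x.1)

theorem gen_fun_hom (F : FundamentalGroupoid S) :
    IsFunctorToGpdFun S (genGpd F) (fun a => ⟨F.i a, .incl a⟩) := by
  refine ⟨fun a => Subtype.ext (F.i_hom.1 a), fun a => Subtype.ext (F.i_hom.2.1 a),
    fun a b hab => ?_⟩
  have hg : F.G.src (F.i a) = F.G.rng (F.i b) := by
    rw [← F.i_hom.1, ← F.i_hom.2.1, hab]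
  dsimp only [genGpd]
  rw [dif_pos hg]
  exact Subtype.ext (F.i_hom.2.2 a b hab)

/-- Every arrow of the fundamental groupoid is generated by the image of `i`. -/
theorem gen_all (F : FundamentalGroupoid S) (b : F.B) : Gen F b := by
  obtain ⟨F', ⟨hF'hom, hF'i⟩, -⟩ :=
    F.univ (genGpd F) (fun a => ⟨F.i a, .incl a⟩) (gen_fun_hom F)
  obtain ⟨F₀, -, huniq⟩ := F.univ F.G F.i F.i_hom
  have hvalhom : IsGpdHomFun F.G F.G (fun b => (F' b).val) := by
    refine ⟨fun a => congrArg Subtype.val (hF'hom.1 a),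
      fun a => congrArg Subtype.val (hF'hom.2.1 a), fun a b h => ?_⟩
    have h2 := congrArg Subtype.val (hF'hom.2.2 a b h)
    have hg : F.G.src (F' a).val = F.G.rng (F' b).val := by
      have e1 := congrArg Subtype.val (hF'hom.1 a)
      have e2 := congrArg Subtype.val (hF'hom.2.1 b)
      simp only [genGpd] at e1 e2
      rw [← e1, ← e2, h]
    show Subtype.val (F' (F.G.comp a b)) = _
    rw [h2]
    dsimp only [genGpd]
    rw [dif_pos hg]
  have e1 := huniq (fun b => (F' b).val)
    ⟨hvalhom, fun a => congrArg Subtype.val (hF'i a)⟩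
  have e2 := huniq id ⟨⟨fun _ => rfl, fun _ => rfl, fun _ _ _ => rfl⟩, fun _ => rfl⟩
  have : (fun b => (F' b).val) = id := e1.trans e2.symm
  have hb : (F' b).val = b := congrFun this b
  rw [← hb]
  exact (F' b).2

end Generation

/-! ### Basic lemmas about fundamental groupoids and coverings -/

section Basic

variable {k : ℕ} {A : Type} {S : KGraphStruct k A}

theorem i_vertex_src (F : FundamentalGroupoid S) {v : A} (hv : S.IsVertex v) :
    F.G.src (F.i v) = F.i v := by
  rw [← F.i_hom.1, hv]

theorem i_vertex_rng (F : FundamentalGroupoid S) {v : A} (hv : S.IsVertex v) :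
    F.G.rng (F.i v) = F.i v := by
  have : S.rng v = v := by rw [← hv, S.rng_src, hv]
  rw [← F.i_hom.2.1, this]

theorem i_inj_on_vertices (F : FundamentalGroupoid S) {v w : A}
    (hv : S.IsVertex v) (hw : S.IsVertex w) (h : F.i v = F.i w) : v = w := by
  obtain ⟨z, -, huniq⟩ := F.obj_bij (F.i v) (i_vertex_src F hv)
  exact (huniq v ⟨hv, rfl⟩).trans (huniq w ⟨hw, h.symm⟩).symm

end Basic

section Covering

variable {k : ℕ} {A A' : Type} {Λ : KGraphStruct k A} {Ω : KGraphStruct k A'}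

theorem vertex_map {p : A' → A} (hp : IsCovering Ω Λ p) {w : A'}
    (hw : Ω.IsVertex w) : Λ.IsVertex (p w) := by
  show Λ.src (p w) = p w
  rw [← hp.hom.1, hw]

/-- Connectivity of the fundamental groupoid of a connected `k`-graph. -/
theorem exists_groupoid_arrow (FΩ : FundamentalGroupoid Ω)
    (hconn : Ω.Connected) {v u : A'} (hv : Ω.IsVertex v) (hu : Ω.IsVertex u) :
    ∃ c, FΩ.G.src c = FΩ.i v ∧ FΩ.G.rng c = FΩ.i u := by
  have key : ∀ a b : A',
      Relation.EqvGen (fun a b => ∃ f, Ω.rng f = a ∧ Ω.src f = b) a b →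
      ∃ c, FΩ.G.src c = FΩ.i (Ω.src b) ∧ FΩ.G.rng c = FΩ.i (Ω.src a) := by
    intro a b h
    induction h with
    | rel a b hab =>
      obtain ⟨f, hf1, hf2⟩ := hab
      refine ⟨FΩ.i f, ?_, ?_⟩
      · rw [← FΩ.i_hom.1, ← hf2, Ω.src_src]
      · rw [← FΩ.i_hom.2.1, hf1, ← hf1, Ω.src_rng]
    | refl a =>
      refine ⟨FΩ.i (Ω.src a), ?_, ?_⟩
      · rw [← FΩ.i_hom.1, Ω.src_src]
      · rw [← FΩ.i_hom.2.1, Ω.rng_src]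
    | symm a b h ih =>
      obtain ⟨c, hc1, hc2⟩ := ih
      exact ⟨FΩ.G.inv c, by rw [FΩ.G.src_inv, hc2], by rw [FΩ.G.rng_inv, hc1]⟩
    | trans a b c h1 h2 ih1 ih2 =>
      obtain ⟨c₁, hc11, hc12⟩ := ih1
      obtain ⟨c₂, hc21, hc22⟩ := ih2
      have hg : FΩ.G.src c₁ = FΩ.G.rng c₂ := by rw [hc11, hc22]
      exact ⟨FΩ.G.comp c₁ c₂, by rw [FΩ.G.src_comp _ _ hg, hc21],
        by rw [FΩ.G.rng_comp _ _ hg, hc12]⟩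
  obtain ⟨c, hc1, hc2⟩ := key u v (hconn u v hu hv)
  exact ⟨c, by rwa [hv] at hc1, by rwa [hu] at hc2⟩

/-- Path lifting lemma: every arrow of the fundamental groupoid of the base
lifts through a covering, with prescribed source (or range) vertex. -/
theorem lift_gen {FΛ : FundamentalGroupoid Λ} {FΩ : FundamentalGroupoid Ω}
    {p : A' → A} (hp : IsCovering Ω Λ p)
    {pst : FΩ.B → FΛ.B} (hpst : IsGpdHomFun FΩ.G FΛ.G pst)
    (hpsti : ∀ a, pst (FΩ.i a) = FΛ.i (p a))
    (g : FΛ.B) (hg : Gen FΛ g) :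
    (∀ w, Ω.IsVertex w → FΛ.i (p w) = FΛ.G.src g →
      ∃ u c, Ω.IsVertex u ∧ FΛ.i (p u) = FΛ.G.rng g ∧
        FΩ.G.src c = FΩ.i w ∧ FΩ.G.rng c = FΩ.i u ∧ pst c = g) ∧
    (∀ u, Ω.IsVertex u → FΛ.i (p u) = FΛ.G.rng g →
      ∃ w c, Ω.IsVertex w ∧ FΛ.i (p w) = FΛ.G.src g ∧
        FΩ.G.src c = FΩ.i w ∧ FΩ.G.rng c = FΩ.i u ∧ pst c = g) := by
  induction hg with
  | incl lam =>
    constructor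
    · intro w hw hsrc
      have hsrc' : p w = Λ.src lam := by
        refine i_inj_on_vertices FΛ (vertex_map hp hw) (Λ.src_src lam) ?_
        rw [hsrc, FΛ.i_hom.1]
      obtain ⟨μ, hμ1, hμ2⟩ := hp.src_lift w hw lam hsrc'.symm
      refine ⟨Ω.rng μ, FΩ.i μ, Ω.src_rng μ, ?_, ?_, ?_, ?_⟩
      · rw [hp.hom.2.1, hμ2, FΛ.i_hom.2.1]
      · rw [← FΩ.i_hom.1, hμ1]
      · rw [← FΩ.i_hom.2.1]
      · rw [hpsti, hμ2]
    · intro u hu hrng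
      have hrng' : p u = Λ.rng lam := by
        refine i_inj_on_vertices FΛ (vertex_map hp hu) (Λ.src_rng lam) ?_
        rw [hrng, FΛ.i_hom.2.1]
      obtain ⟨μ, hμ1, hμ2⟩ := hp.rng_lift u hu lam hrng'.symm
      refine ⟨Ω.src μ, FΩ.i μ, Ω.src_src μ, ?_, ?_, ?_, ?_⟩
      · rw [hp.hom.1, hμ2, FΛ.i_hom.1]
      · rw [← FΩ.i_hom.1]
      · rw [← FΩ.i_hom.2.1, hμ1]
      · rw [hpsti, hμ2]
  | ginv hb ih =>
    constructor
    · intro w hw hsrc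
      rw [FΛ.G.src_inv] at hsrc
      obtain ⟨w₀, c, hw₀, hsrc₀, hc1, hc2, hc3⟩ := ih.2 w hw hsrc
      refine ⟨w₀, FΩ.G.inv c, hw₀, by rw [FΛ.G.rng_inv, hsrc₀],
        by rw [FΩ.G.src_inv, hc2], by rw [FΩ.G.rng_inv, hc1], ?_⟩
      rw [hom_inv hpst, hc3]
    · intro u hu hrng
      rw [FΛ.G.rng_inv] at hrng
      obtain ⟨u₀, c, hu₀, hrng₀, hc1, hc2, hc3⟩ := ih.1 u hu hrng
      refine ⟨u₀, FΩ.G.inv c, hu₀, by rw [FΛ.G.src_inv, hrng₀],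
        by rw [FΩ.G.src_inv, hc2], by rw [FΩ.G.rng_inv, hc1], ?_⟩
      rw [hom_inv hpst, hc3]
  | gcomp ha hb hab iha ihb =>
    constructor
    · intro w hw hsrc
      rw [FΛ.G.src_comp _ _ hab] at hsrc
      obtain ⟨u₁, c₁, hu₁, hiu₁, hc11, hc12, hc13⟩ := ihb.1 w hw hsrc
      obtain ⟨u₂, c₂, hu₂, hiu₂, hc21, hc22, hc23⟩ := iha.1 u₁ hu₁ (by rw [hiu₁, hab])
      have hg : FΩ.G.src c₂ = FΩ.G.rng c₁ := by rw [hc21, hc12]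
      refine ⟨u₂, FΩ.G.comp c₂ c₁, hu₂, by rw [FΛ.G.rng_comp _ _ hab, hiu₂],
        by rw [FΩ.G.src_comp _ _ hg, hc11], by rw [FΩ.G.rng_comp _ _ hg, hc22], ?_⟩
      rw [hpst.2.2 _ _ hg, hc13, hc23]
    · intro u hu hrng
      rw [FΛ.G.rng_comp _ _ hab] at hrng
      obtain ⟨u₁, c₁, hu₁, hiu₁, hc11, hc12, hc13⟩ := iha.2 u hu hrng
      obtain ⟨w₀, c₂, hw₀, hiw₀, hc21, hc22, hc23⟩ := ihb.2 u₁ hu₁ (by rw [hiu₁, ← hab])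
      have hg : FΩ.G.src c₁ = FΩ.G.rng c₂ := by rw [hc11, hc22]
      refine ⟨w₀, FΩ.G.comp c₁ c₂, hw₀, by rw [FΛ.G.src_comp _ _ hab, hiw₀],
        by rw [FΩ.G.src_comp _ _ hg, hc21], by rw [FΩ.G.rng_comp _ _ hg, hc12], ?_⟩
      rw [hpst.2.2 _ _ hg, hc13, hc23]

end Covering

/-- For a connected covering `p : Ω → Λ` and a vertex `x` of
`Λ`, the family `{p₊π(Ω,v) : p v = x}` is a conjugacy class of subgroups of
`π(Λ,x)`. -/
theorem conjugacy_class_of_connected_covering {k : ℕ} {A A' : Type}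
    (Λ : KGraphStruct k A) (Ω : KGraphStruct k A')
    (FΛ : FundamentalGroupoid Λ) (FΩ : FundamentalGroupoid Ω)
    (p : A' → A) (hp : IsCovering Ω Λ p) (hconn : Ω.Connected)
    (pst : FΩ.B → FΛ.B) (hpst : IsGpdHomFun FΩ.G FΛ.G pst)
    (hpsti : ∀ a, pst (FΩ.i a) = FΛ.i (p a))
    (x : A) (hx : Λ.IsVertex x) :
    (∀ v u, Ω.IsVertex v → Ω.IsVertex u → p v = x → p u = x →
      FΛ.G.ConjAt (FΛ.i x) (pst '' FΩ.pi1 v) (pst '' FΩ.pi1 u)) ∧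
    (∀ v K, Ω.IsVertex v → p v = x →
      FΛ.G.ConjAt (FΛ.i x) (pst '' FΩ.pi1 v) K →
      ∃ u, Ω.IsVertex u ∧ p u = x ∧ K = pst '' FΩ.pi1 u) := by
  constructor
  · intro v u hv hu hpv hpu
    obtain ⟨c, hc1, hc2⟩ := exists_groupoid_arrow FΩ hconn hv hu
    refine ⟨pst c, ?_, ?_, ?_⟩
    · rw [← hpst.1, hc1, hpsti, hpv]
    · rw [← hpst.2.1, hc2, hpsti, hpu]
    · exact image_isotropy_conj hpst hc1 hc2
  · rintro v K hv hpv ⟨g, hg1, hg2, hK⟩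
    have hgen := gen_all FΛ g
    obtain ⟨u, c, hu, hpu, hc1, hc2, hc3⟩ :=
      (lift_gen hp hpst hpsti g hgen).1 v hv (by rw [hpv, hg1])
    have hpux : p u = x := by
      refine i_inj_on_vertices FΛ (vertex_map hp hu) hx ?_
      rw [hpu, hg2]
    refine ⟨u, hu, hpux, ?_⟩
    rw [hK, ← hc3]
    exact (image_isotropy_conj hpst hc1 hc2).symm

end KGraphCovering
end

section
/- Let Λ be a k-graph with fundamental groupoid (𝒢(Λ), i), let p : Ω → Λ and q : Σ → Λ be connected coverings, let x be a vertex of Λ, and let v, u be vertices of Ω, Σ with p(v) = x and q(u) = x. Then there exists a morphism of coverings φ : (Ω,p) → (Σ,q) with φ(v) = u if and only if p_*π(Ω,v) ⊆ q_*π(Σ,u) as subgroups of π(Λ,x). -/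
namespace KGraphCovering

section Aux

open Classical

variable {k : ℕ} {A A' A'' : Type}

/-! ### General groupoid lemmas -/

lemma rng_of_vertex {B : Type} (G : GroupoidStruct B) {w : B}
    (h : G.IsVertex w) : G.rng w = w := by
  have h1 := G.rng_src w
  rw [h] at h1; exact h1

lemma inv_of_vertex {B : Type} (G : GroupoidStruct B) {w : B}
    (h : G.IsVertex w) : G.inv w = w := by
  have h1 := G.comp_src_id (G.inv w)
  rw [G.src_inv, rng_of_vertex G h] at h1
  have h2 := G.inv_comp_self w
  rw [h] at h2
  exact h1.symm.trans h2

lemma comp_inv_cancel {B : Type} (G : GroupoidStruct B) {g g' : B}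
    (h : G.rng g = G.rng g') :
    G.comp g' (G.comp (G.inv g') g) = g := by
  rw [← G.assoc g' (G.inv g') g (G.rng_inv g').symm (by rw [G.src_inv, h]),
    G.comp_inv_self, ← h, G.rng_comp_id]

/-! ### Lemmas about fundamental groupoids -/

lemma kg_rng_of_vertex (S : KGraphStruct k A) {w : A}
    (h : S.IsVertex w) : S.rng w = w := by
  have h1 := S.rng_src w
  rw [h] at h1; exact h1

lemma i_vertex {S : KGraphStruct k A} (F : FundamentalGroupoid S) {w : A}
    (h : S.IsVertex w) : F.G.IsVertex (F.i w) := by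
  show F.G.src (F.i w) = F.i w
  rw [← F.i_hom.1, h]

lemma i_inj {S : KGraphStruct k A} (F : FundamentalGroupoid S) {a b : A}
    (ha : S.IsVertex a) (hb : S.IsVertex b) (h : F.i a = F.i b) : a = b := by
  obtain ⟨c, _, hc⟩ := F.obj_bij (F.i a) (i_vertex F ha)
  rw [hc a ⟨ha, rfl⟩, hc b ⟨hb, h.symm⟩]

lemma univ_unique {S : KGraphStruct k A} (F : FundamentalGroupoid S)
    {C : Type} (H : GroupoidStruct C) (F0 : A → C)
    (hF0 : IsFunctorToGpdFun S H F0) (f g : F.B → C)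
    (hf : IsGpdHomFun F.G H f) (hg : IsGpdHomFun F.G H g)
    (hfi : ∀ a, f (F.i a) = F0 a) (hgi : ∀ a, g (F.i a) = F0 a) : f = g := by
  obtain ⟨F', _, hu⟩ := F.univ H F0 hF0
  rw [hu f ⟨hf, hfi⟩, hu g ⟨hg, hgi⟩]

/-- connectivity gives groupoid arrows between any two vertices -/
lemma connected_arrow {S : KGraphStruct k A} (F : FundamentalGroupoid S)
    (hconn : S.Connected) {a b : A} (ha : S.IsVertex a) (hb : S.IsVertex b) :
    ∃ g, F.G.src g = F.i b ∧ F.G.rng g = F.i a := by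
  have key : ∀ a b, Relation.EqvGen
      (fun a b => ∃ f, S.rng f = a ∧ S.src f = b) a b →
      (S.IsVertex a ↔ S.IsVertex b) ∧
      (S.IsVertex a → ∃ g, F.G.src g = F.i b ∧ F.G.rng g = F.i a) := by
    intro a b h
    induction h with
    | rel a b hr =>
      obtain ⟨f, hrf, hsf⟩ := hr
      constructor
      · constructor <;> intro
        · rw [← hsf]; exact S.src_src f
        · rw [← hrf]; exact S.src_rng f
      · intro _
        exact ⟨F.i f, by rw [← F.i_hom.1, hsf], by rw [← F.i_hom.2.1, hrf]⟩
    | refl a =>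
      exact ⟨Iff.rfl, fun h => ⟨F.i a, by rw [← F.i_hom.1, h], by
        rw [← F.i_hom.2.1, kg_rng_of_vertex S h]⟩⟩
    | symm a b _ ih =>
      refine ⟨ih.1.symm, fun hbv => ?_⟩
      obtain ⟨g, hg1, hg2⟩ := ih.2 (ih.1.symm.mp hbv)
      exact ⟨F.G.inv g, by rw [F.G.src_inv, hg2], by rw [F.G.rng_inv, hg1]⟩
    | trans a c b _ _ ih1 ih2 =>
      refine ⟨ih1.1.trans ih2.1, fun hav => ?_⟩
      obtain ⟨g1, h11, h12⟩ := ih1.2 hav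
      obtain ⟨g2, h21, h22⟩ := ih2.2 (ih1.1.mp hav)
      refine ⟨F.G.comp g1 g2, ?_, ?_⟩
      · rw [F.G.src_comp g1 g2 (by rw [h11, h22]), h21]
      · rw [F.G.rng_comp g1 g2 (by rw [h11, h22]), h12]
  exact (key a b (hconn a b ha hb)).2 ha

/-! ### The groupoid of bijections between fibers of a covering -/

variable (Sg : KGraphStruct k A'') (q : A'' → A)

/-- The fiber of the covering `q` over a vertex `x`. -/
abbrev Fib (x : A) : Type := {w : A'' // Sg.IsVertex w ∧ q w = x}

/-- Arrows of the groupoid of bijections between fibers. -/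
abbrev HB : Type := Σ (y : A) (x : A), Fib Sg q x ≃ Fib Sg q y

/-- Cast an equivalence of fibers along an equality of base points. -/
def fibCast {x y z : A} (h : y = z) (f : Fib Sg q x ≃ Fib Sg q y) :
    Fib Sg q x ≃ Fib Sg q z :=
  Eq.rec (motive := fun w _ => Fib Sg q x ≃ Fib Sg q w) f h

/-- The groupoid of bijections between fibers. -/
noncomputable def Hgpd : GroupoidStruct (HB Sg q) where
  src t := ⟨t.2.1, t.2.1, Equiv.refl _⟩
  rng t := ⟨t.1, t.1, Equiv.refl _⟩
  comp s t := if h : t.1 = s.2.1 then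
      ⟨s.1, t.2.1, (fibCast Sg q h t.2.2).trans s.2.2⟩
    else s
  inv t := ⟨t.2.1, t.1, t.2.2.symm⟩
  src_src _ := rfl
  rng_src _ := rfl
  src_rng _ := rfl
  rng_rng _ := rfl
  comp_src_id s := by
    dsimp only
    rw [dif_pos rfl]
    exact congrArg (fun e' => (⟨s.1, s.2.1, e'⟩ : HB Sg q)) (Equiv.refl_trans _)
  rng_comp_id s := by
    dsimp only
    rw [dif_pos rfl]
    exact congrArg (fun e' => (⟨s.1, s.2.1, e'⟩ : HB Sg q)) (Equiv.trans_refl _)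
  src_comp s t h := by
    have h1 : t.1 = s.2.1 := (congrArg Sigma.fst h).symm
    rw [dif_pos h1]
  rng_comp s t h := by
    have h1 : t.1 = s.2.1 := (congrArg Sigma.fst h).symm
    rw [dif_pos h1]
  assoc s t u h1 h2 := by
    have e1 : t.1 = s.2.1 := (congrArg Sigma.fst h1).symm
    have e2 : u.1 = t.2.1 := (congrArg Sigma.fst h2).symm
    obtain ⟨a, b, f⟩ := s
    obtain ⟨c, d, g⟩ := t
    obtain ⟨e, x, hh⟩ := u
    dsimp only at e1 e2 ⊢
    subst e1; subst e2
    rw [dif_pos rfl, dif_pos rfl, dif_pos rfl, dif_pos rfl]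
    exact congrArg (fun e' => (⟨a, x, e'⟩ : HB Sg q)) (Equiv.trans_assoc _ _ _).symm
  src_inv _ := rfl
  rng_inv _ := rfl
  inv_comp_self t := by
    dsimp only
    rw [dif_pos rfl]
    exact congrArg (fun e' => (⟨t.2.1, t.2.1, e'⟩ : HB Sg q)) (Equiv.self_trans_symm _)
  comp_inv_self t := by
    dsimp only
    rw [dif_pos rfl]
    exact congrArg (fun e' => (⟨t.1, t.1, e'⟩ : HB Sg q)) (Equiv.symm_trans_self _)

lemma HB_ext {y y' x x' : A} (hy : y = y') (hx : x = x')
    (f : Fib Sg q x ≃ Fib Sg q y) (f' : Fib Sg q x' ≃ Fib Sg q y')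
    (hf : ∀ (w : A'') (hw : Sg.IsVertex w ∧ q w = x),
      (f ⟨w, hw⟩).1 = (f' ⟨w, ⟨hw.1, hx ▸ hw.2⟩⟩).1) :
    (⟨y, x, f⟩ : HB Sg q) = ⟨y', x', f'⟩ := by
  subst hy; subst hx
  have : f = f' := Equiv.ext fun w => Subtype.ext (by
    have := hf w.1 w.2
    exact this)
  rw [this]

lemma fibCast_fst {x y z : A} (h : y = z) (f : Fib Sg q x ≃ Fib Sg q y)
    (w : Fib Sg q x) : ((fibCast Sg q h f) w).1 = (f w).1 := by
  subst h; rfl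

section Lifts

variable {Λ : KGraphStruct k A} {Sg} {q} (hq : IsCovering Sg Λ q)

/-- The unique lift of an arrow `lam` of the base starting at a given
vertex `w` of the cover. -/
noncomputable def liftS (lam : A) (w : A'') (hw : Sg.IsVertex w)
    (hlam : q w = Λ.src lam) : A'' :=
  Classical.choose (hq.src_lift w hw lam hlam.symm)

lemma liftS_spec (lam : A) (w : A'') (hw : Sg.IsVertex w)
    (hlam : q w = Λ.src lam) :
    Sg.src (liftS hq lam w hw hlam) = w ∧ q (liftS hq lam w hw hlam) = lam :=
  Classical.choose_spec (hq.src_lift w hw lam hlam.symm)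

lemma liftS_unique (lam : A) (w : A'') (hw : Sg.IsVertex w)
    (hlam : q w = Λ.src lam) (a : A'') (ha1 : Sg.src a = w) (ha2 : q a = lam) :
    liftS hq lam w hw hlam = a := by
  apply hq.src_inj
  · rw [(liftS_spec hq lam w hw hlam).1, ha1]
  · rw [(liftS_spec hq lam w hw hlam).2, ha2]

noncomputable def liftR (lam : A) (w : A'') (hw : Sg.IsVertex w)
    (hlam : q w = Λ.rng lam) : A'' :=
  Classical.choose (hq.rng_lift w hw lam hlam.symm)

lemma liftR_spec (lam : A) (w : A'') (hw : Sg.IsVertex w)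
    (hlam : q w = Λ.rng lam) :
    Sg.rng (liftR hq lam w hw hlam) = w ∧ q (liftR hq lam w hw hlam) = lam :=
  Classical.choose_spec (hq.rng_lift w hw lam hlam.symm)

lemma liftR_unique (lam : A) (w : A'') (hw : Sg.IsVertex w)
    (hlam : q w = Λ.rng lam) (a : A'') (ha1 : Sg.rng a = w) (ha2 : q a = lam) :
    liftR hq lam w hw hlam = a := by
  apply hq.rng_inj
  · rw [(liftR_spec hq lam w hw hlam).1, ha1]
  · rw [(liftR_spec hq lam w hw hlam).2, ha2]

lemma src_isVertex (a : A'') : Sg.IsVertex (Sg.src a) := Sg.src_src a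

lemma rng_isVertex (a : A'') : Sg.IsVertex (Sg.rng a) := Sg.src_rng a

/-- The monodromy bijection between fibers induced by an arrow of the base. -/
noncomputable def eqv (lam : A) : Fib Sg q (Λ.src lam) ≃ Fib Sg q (Λ.rng lam) where
  toFun z := ⟨Sg.rng (liftS hq lam z.1 z.2.1 z.2.2), Sg.src_rng _, by
    rw [hq.hom.2.1, (liftS_spec hq lam z.1 z.2.1 z.2.2).2]⟩
  invFun z := ⟨Sg.src (liftR hq lam z.1 z.2.1 z.2.2), Sg.src_src _, by
    rw [hq.hom.1, (liftR_spec hq lam z.1 z.2.1 z.2.2).2]⟩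
  left_inv z := by
    apply Subtype.ext
    dsimp only
    have h1 := liftS_spec hq lam z.1 z.2.1 z.2.2
    rw [liftR_unique hq lam _ _ _ (liftS hq lam z.1 z.2.1 z.2.2) rfl h1.2, h1.1]
  right_inv z := by
    apply Subtype.ext
    dsimp only
    have h1 := liftR_spec hq lam z.1 z.2.1 z.2.2
    rw [liftS_unique hq lam _ _ _ (liftR hq lam z.1 z.2.1 z.2.2) rfl h1.2, h1.1]

lemma eqv_fst (lam : A) (w : A'') (hw : Sg.IsVertex w ∧ q w = Λ.src lam)
    (a : A'') (ha1 : Sg.src a = w) (ha2 : q a = lam) :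
    ((eqv hq lam) ⟨w, hw⟩).1 = Sg.rng a := by
  show Sg.rng (liftS hq lam w hw.1 hw.2) = Sg.rng a
  rw [liftS_unique hq lam w hw.1 hw.2 a ha1 ha2]

/-- The monodromy functor from the base `k`-graph to the fiber-bijection
groupoid. -/
noncomputable def beta (lam : A) : HB Sg q := ⟨Λ.rng lam, Λ.src lam, eqv hq lam⟩

lemma kg_vertex_self_lift {z : A} (hz : Λ.IsVertex z) (w : A'')
    (hw : Sg.IsVertex w ∧ q w = Λ.src z) : ((eqv hq z) ⟨w, hw⟩).1 = w := by
  rw [eqv_fst hq z w hw w hw.1 (by rw [hw.2, hz])]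
  exact kg_rng_of_vertex Sg hw.1

lemma beta_vertex {z : A} (hz : Λ.IsVertex z) :
    beta hq z = ⟨z, z, Equiv.refl _⟩ := by
  apply HB_ext Sg q (kg_rng_of_vertex Λ hz) hz
  intro w hw
  exact kg_vertex_self_lift hq hz w hw

lemma beta_functor : IsFunctorToGpdFun Λ (Hgpd Sg q) (beta hq) := by
  refine ⟨fun a => ?_, fun a => ?_, fun a b hab => ?_⟩
  · -- beta (src a) = Hgpd.src (beta a)
    rw [beta_vertex hq (Λ.src_src a)]
    rfl
  · rw [beta_vertex hq (Λ.src_rng a)]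
    rfl
  · -- composition
    show beta hq (Λ.comp a b) = dite _ _ _
    rw [dif_pos (show (beta hq b).1 = (beta hq a).2.1 from hab.symm)]
    apply HB_ext Sg q (Λ.rng_comp a b hab) (Λ.src_comp a b hab)
    intro w hw
    -- LHS: rng of lift of (comp a b) at w.  RHS: composite of lifts.
    have hwb : Sg.IsVertex w ∧ q w = Λ.src b :=
      ⟨hw.1, by rw [hw.2, Λ.src_comp a b hab]⟩
    set b' := liftS hq b w hwb.1 hwb.2 with hb'
    have hb'spec := liftS_spec hq b w hwb.1 hwb.2
    have hrb' : Sg.IsVertex (Sg.rng b') ∧ q (Sg.rng b') = Λ.src a := by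
      refine ⟨Sg.src_rng _, ?_⟩
      rw [hq.hom.2.1, hb'spec.2, ← hab]
    set a' := liftS hq a (Sg.rng b') hrb'.1 hrb'.2 with ha'
    have ha'spec := liftS_spec hq a (Sg.rng b') hrb'.1 hrb'.2
    have hguard : Sg.src a' = Sg.rng b' := ha'spec.1
    have hcomp : ((eqv hq (Λ.comp a b)) ⟨w, hw⟩).1 = Sg.rng (Sg.comp a' b') := by
      apply eqv_fst hq (Λ.comp a b) w hw (Sg.comp a' b')
      · rw [Sg.src_comp a' b' hguard, hb'spec.1]
      · rw [hq.hom.2.2.1 a' b' hguard, ha'spec.2, hb'spec.2]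
    rw [hcomp]
    show Sg.rng (Sg.comp a' b') =
      ((eqv hq a) ((fibCast Sg q (show Λ.rng b = Λ.src a from hab.symm)
        (eqv hq b)) ⟨w, hwb⟩)).1
    have hfc : (fibCast Sg q (show Λ.rng b = Λ.src a from hab.symm) (eqv hq b))
        ⟨w, hwb⟩ = ⟨Sg.rng b', hrb'.1, hrb'.2⟩ := by
      apply Subtype.ext
      rw [fibCast_fst]
      exact eqv_fst hq b w hwb b' hb'spec.1 hb'spec.2
    rw [hfc, eqv_fst hq a (Sg.rng b') ⟨hrb'.1, hrb'.2⟩ a' ha'spec.1 ha'spec.2,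
      Sg.rng_comp a' b' hguard]

end Lifts

section Act

variable {Λ : KGraphStruct k A} {Sg : KGraphStruct k A''} {q : A'' → A}
  (hq : IsCovering Sg Λ q) (FΛ : FundamentalGroupoid Λ)

include hq in
lemma q_vertex {w : A''} (hw : Sg.IsVertex w) : Λ.IsVertex (q w) := by
  show Λ.src (q w) = q w
  rw [← hq.hom.1, hw]

variable (F' : FΛ.B → HB Sg q)

/-- The action of the fundamental groupoid of the base on the vertices of the
cover, via the monodromy functor `F'`. -/
noncomputable def act : FΛ.B → A'' → A'' := fun g w =>
  if h : Sg.IsVertex w ∧ q w = (F' g).2.1 then ((F' g).2.2 ⟨w, h⟩).1 else w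

lemma act_eval {g : FΛ.B} {w : A''} (t : HB Sg q) (ht : F' g = t)
    (h : Sg.IsVertex w ∧ q w = t.2.1) :
    act FΛ F' g w = ((t.2.2) ⟨w, h⟩).1 := by
  subst ht
  unfold act
  rw [dif_pos h]

variable (hF' : IsGpdHomFun FΛ.G (Hgpd Sg q) F')
  (hF'i : ∀ lam, F' (FΛ.i lam) = beta hq lam)

include hq hF' hF'i

lemma fib_of_guard {g : FΛ.B} {w : A''} (hw : Sg.IsVertex w)
    (hg : FΛ.G.src g = FΛ.i (q w)) : (F' g).2.1 = q w := by
  have h1 : F' (FΛ.G.src g) = (Hgpd Sg q).src (F' g) := hF'.1 g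
  rw [hg, hF'i, beta_vertex hq (q_vertex hq hw)] at h1
  exact (congrArg Sigma.fst h1).symm

lemma actA1 {g : FΛ.B} {w : A''} (hw : Sg.IsVertex w)
    (hg : FΛ.G.src g = FΛ.i (q w)) :
    Sg.IsVertex (act FΛ F' g w) ∧ FΛ.i (q (act FΛ F' g w)) = FΛ.G.rng g ∧
      q (act FΛ F' g w) = (F' g).1 := by
  have hfib := fib_of_guard hq FΛ F' hF' hF'i hw hg
  have heval := act_eval FΛ F' (F' g) rfl ⟨hw, hfib.symm⟩
  have hmem := ((F' g).2.2 ⟨w, ⟨hw, hfib.symm⟩⟩).2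
  obtain ⟨z0, ⟨hz0v, hz0i⟩, _⟩ := FΛ.obj_bij (FΛ.G.rng g) (FΛ.G.src_rng g)
  have h2 : F' (FΛ.G.rng g) = (Hgpd Sg q).rng (F' g) := hF'.2.1 g
  rw [← hz0i, hF'i, beta_vertex hq hz0v] at h2
  have h3 : z0 = (F' g).1 := congrArg Sigma.fst h2
  refine ⟨?_, ?_, ?_⟩
  · rw [heval]; exact hmem.1
  · rw [heval, hmem.2, ← h3, hz0i]
  · rw [heval]; exact hmem.2

lemma actA2 {w : A''} (hw : Sg.IsVertex w) : act FΛ F' (FΛ.i (q w)) w = w := by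
  rw [act_eval FΛ F' ⟨q w, q w, Equiv.refl _⟩
    (by rw [hF'i]; exact beta_vertex hq (q_vertex hq hw)) ⟨hw, rfl⟩]
  rfl

lemma actA4 {lam : A} {w : A''} (hw : Sg.IsVertex w) (hlam : q w = Λ.src lam)
    (a : A'') (ha1 : Sg.src a = w) (ha2 : q a = lam) :
    act FΛ F' (FΛ.i lam) w = Sg.rng a := by
  rw [act_eval FΛ F' (beta hq lam) (hF'i lam) ⟨hw, hlam⟩]
  exact eqv_fst hq lam w ⟨hw, hlam⟩ a ha1 ha2

lemma actA3 {a b : FΛ.B} {w : A''} (hw : Sg.IsVertex w)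
    (hb : FΛ.G.src b = FΛ.i (q w)) (hab : FΛ.G.src a = FΛ.G.rng b) :
    act FΛ F' (FΛ.G.comp a b) w = act FΛ F' a (act FΛ F' b w) := by
  have hfb := fib_of_guard hq FΛ F' hF' hF'i hw hb
  have habg : (Hgpd Sg q).src (F' a) = (Hgpd Sg q).rng (F' b) := by
    rw [← hF'.1, ← hF'.2.1, hab]
  have hcompg : (F' b).1 = (F' a).2.1 := congrArg Sigma.fst habg.symm
  have hFc : F' (FΛ.G.comp a b) =
      ⟨(F' a).1, (F' b).2.1,
        (fibCast Sg q hcompg (F' b).2.2).trans (F' a).2.2⟩ := by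
    rw [hF'.2.2 a b hab]
    show dite _ _ _ = _
    rw [dif_pos hcompg]
  have heb := act_eval FΛ F' (F' b) rfl ⟨hw, hfb.symm⟩
  have hmemb := ((F' b).2.2 ⟨w, ⟨hw, hfb.symm⟩⟩).2
  have hwa : Sg.IsVertex (act FΛ F' b w) ∧ q (act FΛ F' b w) = (F' a).2.1 := by
    rw [heb]; exact ⟨hmemb.1, by rw [hmemb.2, hcompg]⟩
  have hea := act_eval FΛ F' (F' a) rfl hwa
  have hinner : (fibCast Sg q hcompg (F' b).2.2) ⟨w, ⟨hw, hfb.symm⟩⟩ =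
      (⟨act FΛ F' b w, hwa⟩ : Fib Sg q (F' a).2.1) := by
    apply Subtype.ext
    rw [fibCast_fst]
    exact heb.symm
  rw [act_eval FΛ F' _ hFc ⟨hw, hfb.symm⟩, hea, Equiv.trans_apply, hinner]

end Act

section ActionGroupoid

variable {Λ : KGraphStruct k A} (Sg : KGraphStruct k A'') (q : A'' → A)
  (FΛ : FundamentalGroupoid Λ)

/-- Arrows of the action groupoid of `𝒢(Λ)` acting on the vertices of the
covering. -/
abbrev AGB : Type :=
  {t : FΛ.B × A'' // Sg.IsVertex t.2 ∧ FΛ.G.src t.1 = FΛ.i (q t.2)}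

variable {Sg q}
variable (act : FΛ.B → A'' → A'')
  (hA1 : ∀ {g : FΛ.B} {w : A''}, Sg.IsVertex w → FΛ.G.src g = FΛ.i (q w) →
    Sg.IsVertex (act g w) ∧ FΛ.i (q (act g w)) = FΛ.G.rng g)
  (hA2 : ∀ {w : A''}, Sg.IsVertex w → act (FΛ.i (q w)) w = w)
  (hA3 : ∀ {a b : FΛ.B} {w : A''}, Sg.IsVertex w →
    FΛ.G.src b = FΛ.i (q w) → FΛ.G.src a = FΛ.G.rng b →
    act (FΛ.G.comp a b) w = act a (act b w))

/-- The action groupoid. -/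
noncomputable def AGgpd : GroupoidStruct (AGB Sg q FΛ) where
  src t := ⟨(FΛ.G.src t.1.1, t.1.2), t.2.1, by rw [FΛ.G.src_src]; exact t.2.2⟩
  rng t := ⟨(FΛ.G.rng t.1.1, act t.1.1 t.1.2), (hA1 t.2.1 t.2.2).1,
    by rw [FΛ.G.src_rng, (hA1 t.2.1 t.2.2).2]⟩
  comp s t := if h : FΛ.G.src s.1.1 = FΛ.G.rng t.1.1 then
      ⟨(FΛ.G.comp s.1.1 t.1.1, t.1.2), t.2.1,
        by rw [FΛ.G.src_comp _ _ h]; exact t.2.2⟩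
    else s
  inv t := ⟨(FΛ.G.inv t.1.1, act t.1.1 t.1.2), (hA1 t.2.1 t.2.2).1,
    by rw [FΛ.G.src_inv, (hA1 t.2.1 t.2.2).2]⟩
  src_src t := Subtype.ext (by dsimp; rw [FΛ.G.src_src])
  rng_src t := Subtype.ext (by
    dsimp
    rw [FΛ.G.rng_src, t.2.2, hA2 t.2.1])
  src_rng t := Subtype.ext (by dsimp; rw [FΛ.G.src_rng])
  rng_rng t := Subtype.ext (by
    dsimp
    have h1 := hA1 t.2.1 t.2.2
    have h2 : act (FΛ.G.rng t.1.1) (act t.1.1 t.1.2) = act t.1.1 t.1.2 := by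
      rw [← h1.2]; exact hA2 h1.1
    rw [FΛ.G.rng_rng, h2])
  comp_src_id s := by
    dsimp only
    rw [dif_pos (FΛ.G.rng_src s.1.1).symm]
    exact Subtype.ext (by dsimp; rw [FΛ.G.comp_src_id])
  rng_comp_id s := by
    dsimp only
    rw [dif_pos (FΛ.G.src_rng s.1.1)]
    exact Subtype.ext (by dsimp; rw [FΛ.G.rng_comp_id])
  src_comp s t h := by
    have h1 : FΛ.G.src s.1.1 = FΛ.G.rng t.1.1 :=
      congrArg (fun z => z.1.1) h
    rw [dif_pos h1]
    exact Subtype.ext (by dsimp; rw [FΛ.G.src_comp _ _ h1])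
  rng_comp s t h := by
    have h1 : FΛ.G.src s.1.1 = FΛ.G.rng t.1.1 :=
      congrArg (fun z => z.1.1) h
    have h2 : s.1.2 = act t.1.1 t.1.2 := congrArg (fun z => z.1.2) h
    rw [dif_pos h1]
    refine Subtype.ext ?_
    dsimp
    rw [FΛ.G.rng_comp _ _ h1, hA3 t.2.1 t.2.2 h1, ← h2]
  assoc f g h hfg hgh := by
    have e1 : FΛ.G.src f.1.1 = FΛ.G.rng g.1.1 :=
      congrArg (fun z => z.1.1) hfg
    have e2 : FΛ.G.src g.1.1 = FΛ.G.rng h.1.1 :=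
      congrArg (fun z => z.1.1) hgh
    rw [dif_pos e1, dif_pos e2, dif_pos (show FΛ.G.src (FΛ.G.comp f.1.1 g.1.1)
        = FΛ.G.rng h.1.1 by rw [FΛ.G.src_comp _ _ e1]; exact e2),
      dif_pos (show FΛ.G.src f.1.1 = FΛ.G.rng (FΛ.G.comp g.1.1 h.1.1) by
        rw [FΛ.G.rng_comp _ _ e2]; exact e1)]
    exact Subtype.ext (by dsimp; rw [FΛ.G.assoc _ _ _ e1 e2])
  src_inv t := Subtype.ext (by dsimp; rw [FΛ.G.src_inv])
  rng_inv t := Subtype.ext (by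
    dsimp
    have h2 : act (FΛ.G.inv t.1.1) (act t.1.1 t.1.2) = t.1.2 := by
      rw [← hA3 t.2.1 t.2.2 (FΛ.G.src_inv t.1.1), FΛ.G.inv_comp_self,
        t.2.2, hA2 t.2.1]
    rw [FΛ.G.rng_inv, h2])
  inv_comp_self t := by
    dsimp only
    rw [dif_pos (FΛ.G.src_inv t.1.1)]
    exact Subtype.ext (by dsimp; rw [FΛ.G.inv_comp_self])
  comp_inv_self t := by
    dsimp only
    rw [dif_pos (FΛ.G.rng_inv t.1.1).symm]
    exact Subtype.ext (by dsimp; rw [FΛ.G.comp_inv_self])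

end ActionGroupoid

section A5

variable {Λ : KGraphStruct k A} {Sg : KGraphStruct k A''} {q : A'' → A}
  (hq : IsCovering Sg Λ q) (FΛ : FundamentalGroupoid Λ)
  (FS : FundamentalGroupoid Sg)

include hq in
lemma base_functor : IsFunctorToGpdFun Sg FΛ.G (fun σ => FΛ.i (q σ)) := by
  refine ⟨fun σ => ?_, fun σ => ?_, fun σ τ hστ => ?_⟩
  · show FΛ.i (q (Sg.src σ)) = FΛ.G.src (FΛ.i (q σ))
    rw [hq.hom.1, FΛ.i_hom.1]
  · show FΛ.i (q (Sg.rng σ)) = FΛ.G.rng (FΛ.i (q σ))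
    rw [hq.hom.2.1, FΛ.i_hom.2.1]
  · have hg : Λ.src (q σ) = Λ.rng (q τ) := by
      rw [← hq.hom.1, ← hq.hom.2.1, hστ]
    show FΛ.i (q (Sg.comp σ τ)) = FΛ.G.comp (FΛ.i (q σ)) (FΛ.i (q τ))
    rw [hq.hom.2.2.1 σ τ hστ, FΛ.i_hom.2.2 _ _ hg]

variable (act : FΛ.B → A'' → A'')
  (hA1 : ∀ {g : FΛ.B} {w : A''}, Sg.IsVertex w → FΛ.G.src g = FΛ.i (q w) →
    Sg.IsVertex (act g w) ∧ FΛ.i (q (act g w)) = FΛ.G.rng g)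
  (hA2 : ∀ {w : A''}, Sg.IsVertex w → act (FΛ.i (q w)) w = w)
  (hA3 : ∀ {a b : FΛ.B} {w : A''}, Sg.IsVertex w →
    FΛ.G.src b = FΛ.i (q w) → FΛ.G.src a = FΛ.G.rng b →
    act (FΛ.G.comp a b) w = act a (act b w))
  (hA4 : ∀ {lam : A} {w : A''}, Sg.IsVertex w → q w = Λ.src lam →
    ∀ a, Sg.src a = w → q a = lam → act (FΛ.i lam) w = Sg.rng a)

/-- The tautological functor from the covering `k`-graph into the action
groupoid. -/
noncomputable def Nfun (σ : A'') : AGB Sg q FΛ :=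
  ⟨(FΛ.i (q σ), Sg.src σ), Sg.src_src σ, by
    rw [← FΛ.i_hom.1]
    exact congrArg FΛ.i (hq.hom.1 σ).symm⟩

include hA4 in
lemma Nfun_functor :
    IsFunctorToGpdFun Sg (AGgpd FΛ act hA1 hA2 hA3) (Nfun hq FΛ) := by
  refine ⟨fun σ => ?_, fun σ => ?_, fun σ τ hστ => ?_⟩
  · refine Subtype.ext ?_
    show (FΛ.i (q (Sg.src σ)), Sg.src (Sg.src σ))
      = (FΛ.G.src (FΛ.i (q σ)), Sg.src σ)
    rw [hq.hom.1, FΛ.i_hom.1, Sg.src_src]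
  · refine Subtype.ext ?_
    show (FΛ.i (q (Sg.rng σ)), Sg.src (Sg.rng σ))
      = (FΛ.G.rng (FΛ.i (q σ)), act (FΛ.i (q σ)) (Sg.src σ))
    have ha : act (FΛ.i (q σ)) (Sg.src σ) = Sg.rng σ :=
      hA4 (Sg.src_src σ) (hq.hom.1 σ) σ rfl rfl
    rw [hq.hom.2.1, FΛ.i_hom.2.1, Sg.src_rng, ha]
  · have hg : Λ.src (q σ) = Λ.rng (q τ) := by
      rw [← hq.hom.1, ← hq.hom.2.1, hστ]
    have hcond : FΛ.G.src (FΛ.i (q σ)) = FΛ.G.rng (FΛ.i (q τ)) := by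
      rw [← FΛ.i_hom.1, ← FΛ.i_hom.2.1]
      exact congrArg FΛ.i hg
    have hcond2 : FΛ.G.src (Nfun hq FΛ σ).1.1 = FΛ.G.rng (Nfun hq FΛ τ).1.1 :=
      hcond
    show Nfun hq FΛ (Sg.comp σ τ) = dite _ _ _
    rw [dif_pos hcond2]
    refine Subtype.ext ?_
    show (FΛ.i (q (Sg.comp σ τ)), Sg.src (Sg.comp σ τ))
      = (FΛ.G.comp (FΛ.i (q σ)) (FΛ.i (q τ)), Sg.src τ)
    rw [hq.hom.2.2.1 σ τ hστ, FΛ.i_hom.2.2 _ _ hg, Sg.src_comp σ τ hστ]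

variable (qst : FS.B → FΛ.B) (hqst : IsGpdHomFun FS.G FΛ.G qst)
  (hqsti : ∀ a, qst (FS.i a) = FΛ.i (q a))

include hq hqst hqsti hA1 hA2 hA3 hA4 in
lemma act_qst (h : FS.B) (w₀ w₁ : A'') (h0 : Sg.IsVertex w₀)
    (h1 : Sg.IsVertex w₁) (hs0 : FS.i w₀ = FS.G.src h)
    (hs1 : FS.i w₁ = FS.G.rng h) : act (qst h) w₀ = w₁ := by
  obtain ⟨N', ⟨hN'hom, hN'i⟩, _⟩ :=
    FS.univ (AGgpd FΛ act hA1 hA2 hA3) (Nfun hq FΛ)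
      (Nfun_functor hq FΛ act hA1 hA2 hA3 hA4)
  have hom1 : IsGpdHomFun FS.G FΛ.G (fun g => (N' g).1.1) := by
    refine ⟨fun g => ?_, fun g => ?_, fun a b hab => ?_⟩
    · show (N' (FS.G.src g)).1.1 = FΛ.G.src (N' g).1.1
      rw [hN'hom.1]
      rfl
    · show (N' (FS.G.rng g)).1.1 = FΛ.G.rng (N' g).1.1
      rw [hN'hom.2.1]
      rfl
    · have hcond : FΛ.G.src (N' a).1.1 = FΛ.G.rng (N' b).1.1 := by
        have hv : (AGgpd FΛ act hA1 hA2 hA3).src (N' a)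
            = (AGgpd FΛ act hA1 hA2 hA3).rng (N' b) := by
          rw [← hN'hom.1, ← hN'hom.2.1, hab]
        exact congrArg (fun z => z.1.1) hv
      show (N' (FS.G.comp a b)).1.1 = FΛ.G.comp (N' a).1.1 (N' b).1.1
      rw [hN'hom.2.2 a b hab]
      show ((dite _ _ _ : AGB Sg q FΛ)).1.1 = _
      rw [dif_pos hcond]
  have hproj : (fun g => (N' g).1.1) = qst := by
    apply univ_unique FS FΛ.G (fun σ => FΛ.i (q σ)) (base_functor hq FΛ) _ qst
      hom1 hqst _ hqsti
    intro σ
    rw [hN'i σ]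
    rfl
  have esrc : (AGgpd FΛ act hA1 hA2 hA3).src (N' h) = Nfun hq FΛ w₀ := by
    rw [← hN'hom.1, ← hs0, hN'i]
  have ern : (AGgpd FΛ act hA1 hA2 hA3).rng (N' h) = Nfun hq FΛ w₁ := by
    rw [← hN'hom.2.1, ← hs1, hN'i]
  have e2 : (N' h).1.2 = w₀ := by
    have h5 : (N' h).1.2 = Sg.src w₀ :=
      congrArg (fun z : AGB Sg q FΛ => z.1.2) esrc
    rw [h5]
    exact h0
  have e3 : act (N' h).1.1 (N' h).1.2 = w₁ := by
    have h5 : act (N' h).1.1 (N' h).1.2 = Sg.src w₁ :=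
      congrArg (fun z : AGB Sg q FΛ => z.1.2) ern
    rw [h5]
    exact h1
  have e4 : (N' h).1.1 = qst h := congrFun hproj h
  rw [← e4, ← e2]
  exact e3

end A5

end Aux

/-- For connected coverings `p : Ω → Λ`, `q : Σ → Λ` and
vertices `v ∈ p⁻¹(x)`, `u ∈ q⁻¹(x)`, there is a morphism of coverings
`(Ω,p) → (Σ,q)` taking `v` to `u` iff `p₊π(Ω,v) ⊆ q₊π(Σ,u)`. -/
theorem covering_morphism_iff_subset {k : ℕ} {A A' A'' : Type}
    (Λ : KGraphStruct k A) (Ω : KGraphStruct k A') (Sg : KGraphStruct k A'')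
    (FΛ : FundamentalGroupoid Λ) (FΩ : FundamentalGroupoid Ω)
    (FS : FundamentalGroupoid Sg)
    (p : A' → A) (hp : IsCovering Ω Λ p) (hΩconn : Ω.Connected)
    (q : A'' → A) (hq : IsCovering Sg Λ q) (hSconn : Sg.Connected)
    (pst : FΩ.B → FΛ.B) (hpst : IsGpdHomFun FΩ.G FΛ.G pst)
    (hpsti : ∀ a, pst (FΩ.i a) = FΛ.i (p a))
    (qst : FS.B → FΛ.B) (hqst : IsGpdHomFun FS.G FΛ.G qst)
    (hqsti : ∀ a, qst (FS.i a) = FΛ.i (q a))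
    (x : A) (hx : Λ.IsVertex x)
    (v : A') (hv : Ω.IsVertex v) (hpv : p v = x)
    (u : A'') (hu : Sg.IsVertex u) (hqu : q u = x) :
    (∃ φ : A' → A'', IsKGraphHomFun Ω Sg φ ∧ (∀ a, q (φ a) = p a) ∧ φ v = u)
      ↔ pst '' FΩ.pi1 v ⊆ qst '' FS.pi1 u := by
  constructor
  · -- forward direction
    rintro ⟨φ, hφ, hqφ, hφv⟩
    have hiφ : IsFunctorToGpdFun Ω FS.G (fun a => FS.i (φ a)) := by
      refine ⟨fun a => ?_, fun a => ?_, fun a b hab => ?_⟩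
      · show FS.i (φ (Ω.src a)) = FS.G.src (FS.i (φ a))
        rw [hφ.1, FS.i_hom.1]
      · show FS.i (φ (Ω.rng a)) = FS.G.rng (FS.i (φ a))
        rw [hφ.2.1, FS.i_hom.2.1]
      · show FS.i (φ (Ω.comp a b)) = FS.G.comp (FS.i (φ a)) (FS.i (φ b))
        rw [hφ.2.2.1 a b hab,
          FS.i_hom.2.2 _ _ (by rw [← hφ.1, ← hφ.2.1, hab])]
    obtain ⟨φs, ⟨hφshom, hφsi⟩, _⟩ := FΩ.univ FS.G _ hiφ
    have hkey : (fun g => qst (φs g)) = pst := by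
      apply univ_unique FΩ FΛ.G (fun a => FΛ.i (p a)) (base_functor hp FΛ)
        _ pst ?_ hpst ?_ hpsti
      · refine ⟨fun g => ?_, fun g => ?_, fun a b hab => ?_⟩
        · show qst (φs (FΩ.G.src g)) = FΛ.G.src (qst (φs g))
          rw [hφshom.1, hqst.1]
        · show qst (φs (FΩ.G.rng g)) = FΛ.G.rng (qst (φs g))
          rw [hφshom.2.1, hqst.2.1]
        · show qst (φs (FΩ.G.comp a b)) = FΛ.G.comp (qst (φs a)) (qst (φs b))
          rw [hφshom.2.2 a b hab,
            hqst.2.2 _ _ (by rw [← hφshom.1, ← hφshom.2.1, hab])]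
      · intro a
        show qst (φs (FΩ.i a)) = FΛ.i (p a)
        rw [hφsi a, hqsti, hqφ]
    rintro b ⟨a, ha, rfl⟩
    refine ⟨φs a, ⟨?_, ?_⟩, congrFun hkey a⟩
    · show FS.G.src (φs a) = FS.i u
      rw [← hφshom.1, ha.1, hφsi, hφv]
    · show FS.G.rng (φs a) = FS.i u
      rw [← hφshom.2.1, ha.2, hφsi, hφv]
  · -- backward direction
    intro hsub
    classical
    obtain ⟨F', ⟨hF'hom, hF'i⟩, _⟩ :=
      FΛ.univ (Hgpd Sg q) (beta hq) (beta_functor hq)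
    have A1 : ∀ (g : FΛ.B) (w : A''), Sg.IsVertex w →
        FΛ.G.src g = FΛ.i (q w) → Sg.IsVertex (act FΛ F' g w) ∧
          FΛ.i (q (act FΛ F' g w)) = FΛ.G.rng g := fun g w hw hg =>
      ⟨(actA1 hq FΛ F' hF'hom hF'i hw hg).1,
        (actA1 hq FΛ F' hF'hom hF'i hw hg).2.1⟩
    have A2 : ∀ (w : A''), Sg.IsVertex w → act FΛ F' (FΛ.i (q w)) w = w :=
      fun w hw => actA2 hq FΛ F' hF'hom hF'i hw
    have A3 : ∀ (a b : FΛ.B) (w : A''), Sg.IsVertex w →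
        FΛ.G.src b = FΛ.i (q w) → FΛ.G.src a = FΛ.G.rng b →
        act FΛ F' (FΛ.G.comp a b) w = act FΛ F' a (act FΛ F' b w) :=
      fun a b w hw hb hab => actA3 hq FΛ F' hF'hom hF'i hw hb hab
    have A4 : ∀ (lam : A) (w : A''), Sg.IsVertex w → q w = Λ.src lam →
        ∀ a, Sg.src a = w → q a = lam →
        act FΛ F' (FΛ.i lam) w = Sg.rng a :=
      fun lam w hw hlam a h1 h2 => actA4 hq FΛ F' hF'hom hF'i hw hlam a h1 h2
    have A5 : ∀ (h : FS.B) (w₀ w₁ : A''), Sg.IsVertex w₀ → Sg.IsVertex w₁ →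
        FS.i w₀ = FS.G.src h → FS.i w₁ = FS.G.rng h →
        act FΛ F' (qst h) w₀ = w₁ :=
      act_qst hq FΛ FS (act FΛ F')
        (fun {g w} hw hg => A1 g w hw hg)
        (fun {w} hw => A2 w hw)
        (fun {a b w} hw hb hab => A3 a b w hw hb hab)
        (fun {lam w} hw hlam a h1 h2 => A4 lam w hw hlam a h1 h2)
        qst hqst hqsti
    have hchoice : ∀ w : A', Ω.IsVertex w →
        ∃ g, FΩ.G.src g = FΩ.i v ∧ FΩ.G.rng g = FΩ.i w :=
      fun w hw => connected_arrow FΩ hΩconn hw hv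
    -- source of pst g is i (q u) whenever src g = i v
    have hpsrc : ∀ g : FΩ.B, FΩ.G.src g = FΩ.i v →
        FΛ.G.src (pst g) = FΛ.i (q u) := by
      intro g hg
      rw [← hpst.1, hg, hpsti, hpv, ← hqu]
    -- well-definedness of the monodromy transport
    have wd : ∀ (w : A') (g g' : FΩ.B), FΩ.G.src g = FΩ.i v →
        FΩ.G.rng g = FΩ.i w → FΩ.G.src g' = FΩ.i v → FΩ.G.rng g' = FΩ.i w →
        act FΛ F' (pst g) u = act FΛ F' (pst g') u := by
      intro w g g' hg1 hg2 hg1' hg2'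
      have hguard : FΩ.G.src (FΩ.G.inv g') = FΩ.G.rng g := by
        rw [FΩ.G.src_inv, hg2', hg2]
      set d := FΩ.G.comp (FΩ.G.inv g') g with hd
      have hds : FΩ.G.src d = FΩ.i v := by
        rw [hd, FΩ.G.src_comp _ _ hguard, hg1]
      have hdr : FΩ.G.rng d = FΩ.i v := by
        rw [hd, FΩ.G.rng_comp _ _ hguard, FΩ.G.rng_inv, hg1']
      obtain ⟨hσ, hσpi, hσe⟩ := hsub ⟨d, ⟨hds, hdr⟩, rfl⟩
      have hgdec : g = FΩ.G.comp g' d :=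
        (comp_inv_cancel FΩ.G (by rw [hg2, hg2'])).symm
      have hpd : FΛ.G.src (pst d) = FΛ.i (q u) := hpsrc d hds
      have hpg' : FΛ.G.src (pst g') = FΛ.G.rng (pst d) := by
        rw [← hpst.1, ← hpst.2.1, hg1', hdr]
      have hdu : act FΛ F' (pst d) u = u := by
        rw [← hσe]
        exact A5 hσ u u hu hu hσpi.1.symm hσpi.2.symm
      calc act FΛ F' (pst g) u
          = act FΛ F' (FΛ.G.comp (pst g') (pst d)) u := by
            rw [hgdec, hpst.2.2 g' d (by rw [hg1', hdr])]
        _ = act FΛ F' (pst g') (act FΛ F' (pst d) u) :=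
            A3 _ _ _ hu hpd hpg'
        _ = act FΛ F' (pst g') u := by rw [hdu]
    -- definition of the vertex map
    have hval : ∀ w : A', ∃ z : A'', Ω.IsVertex w →
        Sg.IsVertex z ∧ q z = p w ∧
        ∀ g, FΩ.G.src g = FΩ.i v → FΩ.G.rng g = FΩ.i w →
          act FΛ F' (pst g) u = z := by
      intro w
      by_cases hw : Ω.IsVertex w
      · obtain ⟨g0, hg01, hg02⟩ := hchoice w hw
        refine ⟨act FΛ F' (pst g0) u, fun _ => ?_⟩
        have h1 := A1 (pst g0) u hu (hpsrc g0 hg01)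
        refine ⟨h1.1, ?_, fun g hgs hgr => wd w g g0 hgs hgr hg01 hg02⟩
        apply i_inj FΛ (q_vertex hq h1.1) (q_vertex hp hw)
        rw [h1.2, ← hpst.2.1, hg02, hpsti]
      · exact ⟨u, fun h => absurd h hw⟩
    choose φ₀ hφ₀ using hval
    have hφ₀v : φ₀ v = u := by
      have h1 : FΩ.G.src (FΩ.i v) = FΩ.i v := by rw [← FΩ.i_hom.1, hv]
      have h2 : FΩ.G.rng (FΩ.i v) = FΩ.i v := by
        rw [← FΩ.i_hom.2.1, kg_rng_of_vertex Ω hv]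
      rw [← (hφ₀ v hv).2.2 (FΩ.i v) h1 h2, hpsti, hpv, ← hqu]
      exact A2 u hu
    -- the lift map on arrows
    have hsl : ∀ a : A', q (φ₀ (Ω.src a)) = Λ.src (p a) := fun a => by
      rw [(hφ₀ _ (Ω.src_src a)).2.1, hp.hom.1]
    set φ : A' → A'' := fun a =>
      liftS hq (p a) (φ₀ (Ω.src a)) ((hφ₀ _ (Ω.src_src a)).1) (hsl a) with hφdef
    have hφsrc : ∀ a, Sg.src (φ a) = φ₀ (Ω.src a) :=
      fun a => (liftS_spec hq (p a) _ _ _).1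
    have hφq : ∀ a, q (φ a) = p a := fun a => (liftS_spec hq (p a) _ _ _).2
    -- φ agrees with φ₀ on vertices
    have hφvert : ∀ w, Ω.IsVertex w → φ w = φ₀ w := by
      intro w hw
      apply hq.src_inj
      · rw [hφsrc w, (hφ₀ w hw).1]
        exact congrArg φ₀ hw
      · rw [hφq w, (hφ₀ w hw).2.1]
    -- φ intertwines ranges
    have hφrng : ∀ a, Sg.rng (φ a) = φ₀ (Ω.rng a) := by
      intro a
      obtain ⟨gs, hgs1, hgs2⟩ := hchoice (Ω.src a) (Ω.src_src a)
      have hφ₀s : act FΛ F' (pst gs) u = φ₀ (Ω.src a) :=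
        (hφ₀ _ (Ω.src_src a)).2.2 gs hgs1 hgs2
      have hguard : FΩ.G.src (FΩ.i a) = FΩ.G.rng gs := by
        rw [← FΩ.i_hom.1, hgs2]
      have hg'1 : FΩ.G.src (FΩ.G.comp (FΩ.i a) gs) = FΩ.i v := by
        rw [FΩ.G.src_comp _ _ hguard, hgs1]
      have hg'2 : FΩ.G.rng (FΩ.G.comp (FΩ.i a) gs) = FΩ.i (Ω.rng a) := by
        rw [FΩ.G.rng_comp _ _ hguard, FΩ.i_hom.2.1]
      have hstep1 : φ₀ (Ω.rng a) =
          act FΛ F' (pst (FΩ.G.comp (FΩ.i a) gs)) u :=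
        ((hφ₀ _ (Ω.src_rng a)).2.2 _ hg'1 hg'2).symm
      have hstep2 : pst (FΩ.G.comp (FΩ.i a) gs) =
          FΛ.G.comp (FΛ.i (p a)) (pst gs) := by
        rw [hpst.2.2 _ _ hguard, hpsti]
      have hga : FΛ.G.src (FΛ.i (p a)) = FΛ.G.rng (pst gs) := by
        rw [← FΛ.i_hom.1, ← hpst.2.1, hgs2, hpsti, hp.hom.1]
      have hstep3 : act FΛ F' (FΛ.G.comp (FΛ.i (p a)) (pst gs)) u =
          act FΛ F' (FΛ.i (p a)) (act FΛ F' (pst gs) u) :=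
        A3 _ _ _ hu (hpsrc gs hgs1) hga
      have hstep4 : act FΛ F' (FΛ.i (p a)) (φ₀ (Ω.src a)) = Sg.rng (φ a) :=
        A4 (p a) (φ₀ (Ω.src a)) ((hφ₀ _ (Ω.src_src a)).1) (hsl a)
          (φ a) (hφsrc a) (hφq a)
      rw [hstep1, hstep2, hstep3, hφ₀s, hstep4]
    -- φ is a k-graph morphism
    refine ⟨φ, ⟨?_, ?_, ?_, ?_⟩, hφq, by rw [hφvert v hv, hφ₀v]⟩
    · intro a
      rw [hφvert _ (Ω.src_src a), hφsrc a]
    · intro a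
      rw [hφvert _ (Ω.src_rng a), hφrng a]
    · intro a b hab
      have hg : Sg.src (φ a) = Sg.rng (φ b) := by
        rw [hφsrc a, hφrng b, hab]
      apply liftS_unique
      · rw [Sg.src_comp _ _ hg, hφsrc b]
        exact congrArg φ₀ (Ω.src_comp a b hab).symm
      · rw [hq.hom.2.2.1 _ _ hg, hφq a, hφq b,
          ← hp.hom.2.2.1 a b hab]
    · intro a
      rw [← hq.hom.2.2.2, hφq a, hp.hom.2.2.2]

end KGraphCovering
end
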